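/- Let λ > 0 and μ > 0, and let K : D² × D² → M₃(ℂ) be the Type I kernel with equal parameters: K(z,w) = D(z,w)·A(z,w)·D(z,w)·(1 − z₁w̄₁)^{−λ−2}(1 − z₂w̄₂)^{−λ−2}, where D(z,w) = diag((1−z₁w̄₁)(1−z₂w̄₂), 1−z₂w̄₂, 1−z₁w̄₁) and A(z,w) has rows (1, z₁, z₂), (w̄₁, 1/λ + μ² + z₁w̄₁, w̄₁z₂), (w̄₂, z₁w̄₂, 1/λ + μ² + z₂w̄₂). Let T ∈ M₃(ℂ) be the permutation matrix with Te₁ = e₁, Te₂ = e₃, Te₃ = e₂. Then for all z = (z₁,z₂), w = (w₁,w₂) ∈ D²: K((z₂,z₁), (w₂,w₁)) = T · K((z₁,z₂), (w₁,w₂)) · T*. -/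

import Mathlib

open Matrix
set_option maxHeartbeats 2000000

lemma diag3 (a b c : ℂ) :
    Matrix.diagonal ![a, b, c] = !![a, 0, 0; 0, b, 0; 0, 0, c] := by
  ext i j
  fin_cases i <;> fin_cases j <;> simp [Matrix.diagonal, Matrix.vecHead, Matrix.vecTail]

/-- The Type I kernel on the bidisc with equal parameters `λ₁ = λ₂ = λ`, `μ₁ = μ₂ = μ`:
`K(z,w) = D(z,w) · A(z,w) · D(z,w) · (1 − z₁w̄₁)^{−λ−2} (1 − z₂w̄₂)^{−λ−2}`. -/
noncomputable def bidiscKernel (lam μ : ℝ) (z₁ z₂ w₁ w₂ : ℂ) : Matrix (Fin 3) (Fin 3) ℂ :=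
  ((1 - z₁ * star w₁) ^ (-(lam : ℂ) - 2) * (1 - z₂ * star w₂) ^ (-(lam : ℂ) - 2)) •
    (Matrix.diagonal
        ![(1 - z₁ * star w₁) * (1 - z₂ * star w₂), 1 - z₂ * star w₂, 1 - z₁ * star w₁] *
      !![1, z₁, z₂;
         star w₁, 1 / (lam : ℂ) + (μ : ℂ) ^ 2 + z₁ * star w₁, star w₁ * z₂;
         star w₂, z₁ * star w₂, 1 / (lam : ℂ) + (μ : ℂ) ^ 2 + z₂ * star w₂] *
      Matrix.diagonal
        ![(1 - z₁ * star w₁) * (1 - z₂ * star w₂), 1 - z₂ * star w₂, 1 - z₁ * star w₁])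

/-- Swap-invariance of the equal-parameter Type I kernel on the bidisc:
with `T` the permutation matrix exchanging the last two coordinates,
`K((z₂,z₁),(w₂,w₁)) = T · K((z₁,z₂),(w₁,w₂)) · T*`. -/
theorem statement17 (lam μ : ℝ) (hlam : 0 < lam) (hμ : 0 < μ)
    (z₁ z₂ w₁ w₂ : ℂ)
    (hz₁ : ‖z₁‖ < 1) (hz₂ : ‖z₂‖ < 1)
    (hw₁ : ‖w₁‖ < 1) (hw₂ : ‖w₂‖ < 1) :
    bidiscKernel lam μ z₂ z₁ w₂ w₁ =
      (!![1, 0, 0; 0, 0, 1; 0, 1, 0] : Matrix (Fin 3) (Fin 3) ℂ) *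
        bidiscKernel lam μ z₁ z₂ w₁ w₂ *
        (!![1, 0, 0; 0, 0, 1; 0, 1, 0] : Matrix (Fin 3) (Fin 3) ℂ)ᴴ := by
  unfold bidiscKernel
  simp only [diag3]
  ext i j
  fin_cases i <;> fin_cases j <;>
    simp [Matrix.mul_apply, Fin.sum_univ_three, Matrix.smul_apply, mul_comm] <;> ring
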